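/- There is a universal constant C such that the following holds. Let n ≥ 1, ε ≥ 0, assume the n-qubit hypotheses with error ε for ψ, (X_j)_D, (Z_j)_D, and let ψ' = ψ ⊗ |EPR⟩^{⊗n}_{A'} ⊗ |EPR⟩^{⊗n}_{B'}, where registers A' and B' each consist of 2n qubits, grouped into n EPR pairs with pair j occupying qubits 2j−1 and 2j. For i ∈ {1,…,n} define the swap operators (S_i)_{AA'} = ½(I + (X_i)_A ⊗ σx_{2i−1} + (Z_i)_A ⊗ σz_{2i−1} + i(X_i Z_i)_A ⊗ σy_{2i−1}), acting on H_A and qubit 2i−1 of register A', and (S'_i)_{BA'} = ½(I + (X_i)_B ⊗ σx_{2i} + (Z_i)_B ⊗ σz_{2i} + i(X_i Z_i)_B ⊗ σy_{2i}), acting on H_B and qubit 2i of register A'. Then for every i ∈ {1,…,n}: ‖(S_i)_{AA'}ψ' − (S'_i)_{BA'}ψ'‖ ≤ C·ε. -/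

import Mathlib

open scoped Matrix Kronecker ComplexConjugate

noncomputable section

abbrev Reg (n : ℕ) := (Fin n × Fin 2) → Fin 2

def cnorm {ι : Type*} [Fintype ι] (v : ι → ℂ) : ℝ :=
  Real.sqrt (∑ i, ‖v i‖ ^ 2)

def cinner {ι : Type*} [Fintype ι] (v w : ι → ℂ) : ℂ :=
  ∑ i, (starRingEnd ℂ) (v i) * w i

def IsReflection {ι : Type*} [Fintype ι] [DecidableEq ι] (M : Matrix ι ι ℂ) : Prop :=
  M.IsHermitian ∧ M * M = 1

def sx : Matrix (Fin 2) (Fin 2) ℂ := !![0, 1; 1, 0]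
def sy : Matrix (Fin 2) (Fin 2) ℂ := !![0, -Complex.I; Complex.I, 0]
def sz : Matrix (Fin 2) (Fin 2) ℂ := !![1, 0; 0, -1]

def onQubit {K : Type*} [Fintype K] [DecidableEq K] (k : K) (M : Matrix (Fin 2) (Fin 2) ℂ) :
    Matrix (K → Fin 2) (K → Fin 2) ℂ :=
  fun f g => if ∀ k', k' ≠ k → f k' = g k' then M (f k) (g k) else 0

def eprAmp : Fin 2 → Fin 2 → ℂ := fun a b => if a = b then ((Real.sqrt 2 : ℝ) : ℂ)⁻¹ else 0

def eprLocal (n : ℕ) : Reg n → ℂ := fun f => ∏ j : Fin n, eprAmp (f (j, 0)) (f (j, 1))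

def psiExt {dA dB : ℕ} (n : ℕ) (ψ : Fin dA × Fin dB → ℂ) :
    (Fin dA × Reg n) × (Fin dB × Reg n) → ℂ :=
  fun p => ψ (p.1.1, p.2.1) * eprLocal n p.1.2 * eprLocal n p.2.2

def NQubitHyp (n : ℕ) (ε : ℝ) {dA dB : ℕ}
    (XA ZA : Fin n → Matrix (Fin dA) (Fin dA) ℂ)
    (XB ZB : Fin n → Matrix (Fin dB) (Fin dB) ℂ)
    (ψ : Fin dA × Fin dB → ℂ) : Prop :=
  cnorm ψ = 1 ∧
  (∀ j, IsReflection (XA j) ∧ IsReflection (ZA j) ∧ IsReflection (XB j) ∧ IsReflection (ZB j)) ∧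
  (∀ j, XA j * ZA j + ZA j * XA j = 0) ∧
  (∀ j, XB j * ZB j + ZB j * XB j = 0) ∧
  (∀ P Q : Fin n → Matrix (Fin dA) (Fin dA) ℂ, (P = XA ∨ P = ZA) → (Q = XA ∨ Q = ZA) →
    ∀ i j : Fin n, i ≠ j →
    cnorm (((P i * Q j - Q j * P i) ⊗ₖ (1 : Matrix (Fin dB) (Fin dB) ℂ)).mulVec ψ) ≤ ε) ∧
  (∀ P Q : Fin n → Matrix (Fin dB) (Fin dB) ℂ, (P = XB ∨ P = ZB) → (Q = XB ∨ Q = ZB) →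
    ∀ i j : Fin n, i ≠ j →
    cnorm (((1 : Matrix (Fin dA) (Fin dA) ℂ) ⊗ₖ (P i * Q j - Q j * P i)).mulVec ψ) ≤ ε) ∧
  (∀ (P : Fin n → Matrix (Fin dA) (Fin dA) ℂ) (P' : Fin n → Matrix (Fin dB) (Fin dB) ℂ),
    ((P = XA ∧ P' = XB) ∨ (P = ZA ∧ P' = ZB)) →
    ∀ j, cnorm ((P j ⊗ₖ P' j).mulVec ψ - ψ) ≤ ε)


/-- The swap operator (S_i)_{AA'} between Alice's i-th qubit and qubit (i,0) of register A'. -/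
def swapOp {d : ℕ} (n : ℕ) (X Z : Matrix (Fin d) (Fin d) ℂ) (i : Fin n) :
    Matrix (Fin d × Reg n) (Fin d × Reg n) ℂ :=
  (1 / 2 : ℂ) • ((1 : Matrix (Fin d × Reg n) (Fin d × Reg n) ℂ)
    + X ⊗ₖ onQubit (i, (0 : Fin 2)) sx
    + Z ⊗ₖ onQubit (i, (0 : Fin 2)) sz
    + Complex.I • ((X * Z) ⊗ₖ onQubit (i, (0 : Fin 2)) sy))

/-- The swap operator (S'_i)_{BA'} between Bob's i-th qubit and qubit (i,1) of register A',
embedded in the full space (H_A ⊗ A') ⊗ (H_B ⊗ B'). -/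
def swapOp' {dA dB : ℕ} (n : ℕ) (X Z : Matrix (Fin dB) (Fin dB) ℂ) (i : Fin n) :
    Matrix ((Fin dA × Reg n) × (Fin dB × Reg n)) ((Fin dA × Reg n) × (Fin dB × Reg n)) ℂ :=
  (1 / 2 : ℂ) • ((1 : Matrix ((Fin dA × Reg n) × (Fin dB × Reg n)) ((Fin dA × Reg n) × (Fin dB × Reg n)) ℂ)
    + ((1 : Matrix (Fin dA) (Fin dA) ℂ) ⊗ₖ onQubit (i, (1 : Fin 2)) sx) ⊗ₖ
        (X ⊗ₖ (1 : Matrix (Reg n) (Reg n) ℂ))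
    + ((1 : Matrix (Fin dA) (Fin dA) ℂ) ⊗ₖ onQubit (i, (1 : Fin 2)) sz) ⊗ₖ
        (Z ⊗ₖ (1 : Matrix (Reg n) (Reg n) ℂ))
    + Complex.I • (((1 : Matrix (Fin dA) (Fin dA) ℂ) ⊗ₖ onQubit (i, (1 : Fin 2)) sy) ⊗ₖ
        ((X * Z) ⊗ₖ (1 : Matrix (Reg n) (Reg n) ℂ))))

namespace Stmt4Aux

open Matrix

/-! ### cnorm basics -/

section cnormBasics

variable {ι : Type*} [Fintype ι]

def toE (v : ι → ℂ) : EuclideanSpace ℂ ι := (WithLp.equiv 2 (ι → ℂ)).symm v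

lemma cnorm_eq (v : ι → ℂ) : cnorm v = ‖toE v‖ := by
  rw [EuclideanSpace.norm_eq]; rfl

lemma toE_add (v w : ι → ℂ) : toE (v + w) = toE v + toE w := rfl
lemma toE_sub (v w : ι → ℂ) : toE (v - w) = toE v - toE w := rfl
lemma toE_smul (c : ℂ) (v : ι → ℂ) : toE (c • v) = c • toE v := rfl
lemma toE_neg (v : ι → ℂ) : toE (-v) = -toE v := rfl

lemma cnorm_add_le (v w : ι → ℂ) : cnorm (v + w) ≤ cnorm v + cnorm w := by
  rw [cnorm_eq, cnorm_eq, cnorm_eq, toE_add]; exact norm_add_le _ _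

lemma cnorm_smul (c : ℂ) (v : ι → ℂ) : cnorm (c • v) = ‖c‖ * cnorm v := by
  rw [cnorm_eq, cnorm_eq, toE_smul]; exact norm_smul _ _

lemma cnorm_neg (v : ι → ℂ) : cnorm (-v) = cnorm v := by
  rw [cnorm_eq, cnorm_eq, toE_neg]; exact norm_neg _

end cnormBasics

end Stmt4Aux
namespace Stmt4Aux

open Matrix

section unitary

variable {ι : Type*} [Fintype ι] [DecidableEq ι]

def IsUni (M : Matrix ι ι ℂ) : Prop := Mᴴ * M = 1

lemma dot_self_eq (x : ι → ℂ) : star x ⬝ᵥ x = ((∑ i, ‖x i‖ ^ 2 : ℝ) : ℂ) := by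
  rw [dotProduct]
  push_cast
  refine Finset.sum_congr rfl fun i _ => ?_
  simp [Pi.star_apply, Complex.star_def, Complex.conj_mul', Complex.sq_norm]

lemma cnorm_mulVec {M : Matrix ι ι ℂ} (hM : IsUni M) (v : ι → ℂ) :
    cnorm (M.mulVec v) = cnorm v := by
  unfold cnorm
  congr 1
  have h : star (M.mulVec v) ⬝ᵥ (M.mulVec v) = star v ⬝ᵥ v := by
    rw [Matrix.star_mulVec, ← Matrix.dotProduct_mulVec, Matrix.mulVec_mulVec, hM,
      Matrix.one_mulVec]
  rw [dot_self_eq, dot_self_eq] at h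
  exact_mod_cast h

lemma IsUni.one : IsUni (1 : Matrix ι ι ℂ) := by simp [IsUni]

lemma isUni_of_reflection {M : Matrix ι ι ℂ} (h : IsReflection M) : IsUni M := by
  unfold IsUni
  rw [h.1]
  exact h.2

lemma kron_conjTranspose {α β : Type*} [Fintype α] [Fintype β] [DecidableEq α] [DecidableEq β]
    (A : Matrix α α ℂ) (B : Matrix β β ℂ) : (A ⊗ₖ B)ᴴ = Aᴴ ⊗ₖ Bᴴ := by
  ext ⟨i, j⟩ ⟨k, l⟩
  simp [Matrix.conjTranspose_apply, Matrix.kroneckerMap_apply, star_mul', mul_comm]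

lemma IsUni.kron {α β : Type*} [Fintype α] [Fintype β] [DecidableEq α] [DecidableEq β]
    {A : Matrix α α ℂ} {B : Matrix β β ℂ} (hA : IsUni A) (hB : IsUni B) : IsUni (A ⊗ₖ B) := by
  unfold IsUni
  rw [kron_conjTranspose, ← Matrix.mul_kronecker_mul, hA, hB, Matrix.one_kronecker_one]

end unitary

end Stmt4Aux
namespace Stmt4Aux

open Matrix

section onQubitLemmas

variable {K : Type*} [Fintype K] [DecidableEq K]

lemma sum_agree (k : K) (f : K → Fin 2) (F : (K → Fin 2) → ℂ) :
    (∑ g : K → Fin 2, if ∀ k', k' ≠ k → f k' = g k' then F g else 0)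
      = ∑ c : Fin 2, F (Function.update f k c) := by
  classical
  rw [← Finset.sum_filter]
  refine Finset.sum_nbij' (i := fun g => g k) (j := fun c => Function.update f k c)
    (fun a _ => Finset.mem_univ _) ?_ ?_ ?_ ?_
  · intro c _
    simp only [Finset.mem_filter, Finset.mem_univ, true_and]
    intro k' hk'
    rw [Function.update_of_ne hk']
  · intro g hg
    simp only [Finset.mem_filter, Finset.mem_univ, true_and] at hg
    funext k'
    by_cases h : k' = k
    · subst h; rw [Function.update_self]
    · rw [Function.update_of_ne h]; exact hg k' h
  · intro c _
    rw [Function.update_self]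
  · intro g hg
    simp only [Finset.mem_filter, Finset.mem_univ, true_and] at hg
    congr 1
    funext k'
    by_cases h : k' = k
    · subst h; rw [Function.update_self]
    · rw [Function.update_of_ne h]; exact (hg k' h).symm

lemma onQubit_apply_pos (k : K) (M : Matrix (Fin 2) (Fin 2) ℂ) {f g : K → Fin 2}
    (h : ∀ k', k' ≠ k → f k' = g k') : onQubit k M f g = M (f k) (g k) := by
  simp only [onQubit, if_pos h]

lemma onQubit_apply_neg (k : K) (M : Matrix (Fin 2) (Fin 2) ℂ) {f g : K → Fin 2}
    (h : ¬ ∀ k', k' ≠ k → f k' = g k') : onQubit k M f g = 0 := by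
  simp only [onQubit, if_neg h]

lemma onQubit_mulVec (k : K) (M : Matrix (Fin 2) (Fin 2) ℂ) (v : (K → Fin 2) → ℂ)
    (f : K → Fin 2) :
    (onQubit k M).mulVec v f = ∑ c, M (f k) c * v (Function.update f k c) := by
  have : (onQubit k M).mulVec v f
      = ∑ g : K → Fin 2, if ∀ k', k' ≠ k → f k' = g k' then M (f k) (g k) * v g else 0 := by
    refine Finset.sum_congr rfl fun g _ => ?_
    simp only [onQubit, ite_mul, zero_mul]
  rw [this, sum_agree k f (fun g => M (f k) (g k) * v g)]
  simp [Function.update_self]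

lemma onQubit_mul (k : K) (M N : Matrix (Fin 2) (Fin 2) ℂ) :
    onQubit k M * onQubit k N = onQubit k (M * N) := by
  ext f g
  rw [Matrix.mul_apply]
  have step : (∑ h : K → Fin 2, onQubit k M f h * onQubit k N h g)
      = ∑ h : K → Fin 2, if ∀ k', k' ≠ k → f k' = h k'
          then M (f k) (h k) * onQubit k N h g else 0 := by
    refine Finset.sum_congr rfl fun h _ => ?_
    simp only [onQubit, ite_mul, zero_mul]
  rw [step, sum_agree k f (fun h => M (f k) (h k) * onQubit k N h g)]
  by_cases hc : ∀ k', k' ≠ k → f k' = g k'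
  · have hv : ∀ c : Fin 2,
        onQubit k N (Function.update f k c) g = N c (g k) := by
      intro c
      rw [onQubit_apply_pos k N (fun k' hk' => by
        rw [Function.update_of_ne hk']; exact hc k' hk'), Function.update_self]
    simp only [Function.update_self, hv]
    rw [onQubit_apply_pos k _ hc, Matrix.mul_apply]
  · have hv : ∀ c : Fin 2,
        onQubit k N (Function.update f k c) g = 0 := by
      intro c
      refine onQubit_apply_neg k N fun hh => hc fun k' hk' => ?_
      rw [← hh k' hk', Function.update_of_ne hk']
    simp only [Function.update_self, hv, mul_zero, Finset.sum_const_zero]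
    rw [onQubit_apply_neg k _ hc]

lemma onQubit_one (k : K) : onQubit k (1 : Matrix (Fin 2) (Fin 2) ℂ) = 1 := by
  ext f g
  by_cases hc : ∀ k', k' ≠ k → f k' = g k'
  · rw [onQubit_apply_pos k _ hc]
    by_cases hk : f k = g k
    · have hfg : f = g := funext fun k' => if h : k' = k then by subst h; exact hk else hc k' h
      subst hfg
      rw [Matrix.one_apply_eq, Matrix.one_apply_eq]
    · have hfg : f ≠ g := fun h => hk (by rw [h])
      rw [Matrix.one_apply_ne hk, Matrix.one_apply_ne hfg]
  · rw [onQubit_apply_neg k _ hc]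
    have hfg : f ≠ g := fun h => hc (fun k' _ => by rw [h])
    rw [Matrix.one_apply_ne hfg]

lemma onQubit_conjTranspose (k : K) (M : Matrix (Fin 2) (Fin 2) ℂ) :
    (onQubit k M)ᴴ = onQubit k Mᴴ := by
  ext f g
  rw [Matrix.conjTranspose_apply]
  by_cases hc : ∀ k', k' ≠ k → f k' = g k'
  · rw [onQubit_apply_pos k _ hc, onQubit_apply_pos k _ (fun k' hk' => (hc k' hk').symm)]
    rfl
  · rw [onQubit_apply_neg k _ hc,
      onQubit_apply_neg k _ (fun hh => hc fun k' hk' => (hh k' hk').symm), star_zero]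

lemma onQubit_neg (k : K) (M : Matrix (Fin 2) (Fin 2) ℂ) :
    onQubit k (-M) = -onQubit k M := by
  ext f g
  rw [Matrix.neg_apply]
  by_cases hc : ∀ k', k' ≠ k → f k' = g k'
  · rw [onQubit_apply_pos k _ hc, onQubit_apply_pos k _ hc]; rfl
  · rw [onQubit_apply_neg k _ hc, onQubit_apply_neg k _ hc, neg_zero]

lemma IsUni.onQubit {M : Matrix (Fin 2) (Fin 2) ℂ} (hM : IsUni M) (k : K) :
    IsUni (_root_.onQubit k M) := by
  unfold IsUni
  rw [onQubit_conjTranspose, onQubit_mul, hM, onQubit_one]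

end onQubitLemmas

section pauli

lemma sx_uni : IsUni sx := by
  unfold IsUni sx
  ext i j
  fin_cases i <;> fin_cases j <;>
    simp [Matrix.mul_apply, Matrix.conjTranspose_apply, Fin.sum_univ_two, Matrix.one_apply]

lemma sz_uni : IsUni sz := by
  unfold IsUni sz
  ext i j
  fin_cases i <;> fin_cases j <;>
    simp [Matrix.mul_apply, Matrix.conjTranspose_apply, Fin.sum_univ_two, Matrix.one_apply]

lemma sy_uni : IsUni sy := by
  unfold IsUni sy
  ext i j
  fin_cases i <;> fin_cases j <;>
    simp [Matrix.mul_apply, Matrix.conjTranspose_apply, Fin.sum_univ_two, Matrix.one_apply,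
      Complex.mul_conj, Complex.normSq_I]

lemma sx_transpose : sxᵀ = sx := by
  unfold sx; ext i j; fin_cases i <;> fin_cases j <;> simp

lemma sz_transpose : szᵀ = sz := by
  unfold sz; ext i j; fin_cases i <;> fin_cases j <;> simp

lemma sy_transpose : syᵀ = -sy := by
  unfold sy; ext i j; fin_cases i <;> fin_cases j <;> simp

end pauli

end Stmt4Aux
namespace Stmt4Aux

open Matrix

section kron

variable {α β : Type*} [Fintype α] [Fintype β]

lemma kron_mulVec (A : Matrix α α ℂ) (B : Matrix β β ℂ) (v : α × β → ℂ) (p : α × β) :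
    (A ⊗ₖ B).mulVec v p = ∑ a, ∑ b, A p.1 a * B p.2 b * v (a, b) := by
  obtain ⟨i, j⟩ := p
  rw [Matrix.mulVec, dotProduct, Fintype.sum_prod_type]
  rfl

end kron

section epr

lemma eprLocal_factor {n : ℕ} (r : Reg n) (i : Fin n) :
    eprLocal n r
      = eprAmp (r (i, 0)) (r (i, 1)) * ∏ j ∈ Finset.univ.erase i, eprAmp (r (j, 0)) (r (j, 1)) := by
  rw [eprLocal, ← Finset.mul_prod_erase _ _ (Finset.mem_univ i)]

lemma update_pair_ne {n : ℕ} (r : Reg n) (i : Fin n) (b c : Fin 2) (j : Fin n) (b' : Fin 2)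
    (h : (j, b') ≠ (i, b)) : Function.update r (i, b) c (j, b') = r (j, b') :=
  Function.update_of_ne h _ _

lemma eprLocal_update_fst {n : ℕ} (r : Reg n) (i : Fin n) (c : Fin 2) :
    eprLocal n (Function.update r (i, (0 : Fin 2)) c)
      = eprAmp c (r (i, 1)) * ∏ j ∈ Finset.univ.erase i, eprAmp (r (j, 0)) (r (j, 1)) := by
  rw [eprLocal_factor _ i]
  congr 1
  · rw [Function.update_self, update_pair_ne r i 0 c i 1 (by simp)]
  · refine Finset.prod_congr rfl fun j hj => ?_
    have hji : j ≠ i := Finset.ne_of_mem_erase hj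
    rw [update_pair_ne r i 0 c j 0 (by simp [hji]), update_pair_ne r i 0 c j 1 (by simp [hji])]

lemma eprLocal_update_snd {n : ℕ} (r : Reg n) (i : Fin n) (c : Fin 2) :
    eprLocal n (Function.update r (i, (1 : Fin 2)) c)
      = eprAmp (r (i, 0)) c * ∏ j ∈ Finset.univ.erase i, eprAmp (r (j, 0)) (r (j, 1)) := by
  rw [eprLocal_factor _ i]
  congr 1
  · rw [Function.update_self, update_pair_ne r i 1 c i 0 (by simp)]
  · refine Finset.prod_congr rfl fun j hj => ?_
    have hji : j ≠ i := Finset.ne_of_mem_erase hj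
    rw [update_pair_ne r i 1 c j 0 (by simp [hji]), update_pair_ne r i 1 c j 1 (by simp [hji])]

lemma sum_sq_eprAmp : ∑ u : Fin 2 → Fin 2, ‖eprAmp (u 0) (u 1)‖ ^ 2 = 1 := by
  have h1 : (∑ u : Fin 2 → Fin 2, ‖eprAmp (u 0) (u 1)‖ ^ 2)
      = ∑ p : Fin 2 × Fin 2, ‖eprAmp p.1 p.2‖ ^ 2 :=
    Fintype.sum_equiv (finTwoArrowEquiv (Fin 2)) _ _ (fun u => rfl)
  rw [h1, Fintype.sum_prod_type]
  simp only [Fin.sum_univ_two]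
  norm_num [eprAmp, Real.sq_sqrt]

lemma sum_sq_eprLocal (n : ℕ) : ∑ r : Reg n, ‖eprLocal n r‖ ^ 2 = 1 := by
  have key : ∀ r : Reg n, ‖eprLocal n r‖ ^ 2 = ∏ j : Fin n, ‖eprAmp (r (j, 0)) (r (j, 1))‖ ^ 2 := by
    intro r
    rw [eprLocal, norm_prod, ← Finset.prod_pow]
  simp only [key]
  rw [← Fintype.sum_equiv (Equiv.curry (Fin n) (Fin 2) (Fin 2)).symm
    (fun h : Fin n → Fin 2 → Fin 2 => ∏ j : Fin n, ‖eprAmp (h j 0) (h j 1)‖ ^ 2) _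
    (fun h => rfl)]
  rw [← Fintype.piFinset_univ,
    Finset.sum_prod_piFinset Finset.univ
      (fun (_ : Fin n) (u : Fin 2 → Fin 2) => ‖eprAmp (u 0) (u 1)‖ ^ 2)]
  simp only [sum_sq_eprAmp, Finset.prod_const_one]

lemma psiExt_sub {dA dB n : ℕ} (φ₁ φ₂ : Fin dA × Fin dB → ℂ) :
    psiExt n (φ₁ - φ₂) = psiExt n φ₁ - psiExt n φ₂ := by
  funext p
  simp [psiExt, sub_mul]

lemma psiExt_add {dA dB n : ℕ} (φ₁ φ₂ : Fin dA × Fin dB → ℂ) :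
    psiExt n (φ₁ + φ₂) = psiExt n φ₁ + psiExt n φ₂ := by
  funext p
  simp [psiExt, add_mul]

set_option maxHeartbeats 1000000 in
lemma cnorm_psiExt {dA dB n : ℕ} (φ : Fin dA × Fin dB → ℂ) :
    cnorm (psiExt n φ) = cnorm φ := by
  unfold cnorm
  congr 1
  have key : ∀ (a : Fin dA) (r : Reg n) (b : Fin dB) (s : Reg n),
      ‖psiExt n φ ((a, r), (b, s))‖ ^ 2
        = ‖φ (a, b)‖ ^ 2 * ‖eprLocal n r‖ ^ 2 * ‖eprLocal n s‖ ^ 2 := by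
    intro a r b s
    simp [psiExt, mul_pow]
  calc ∑ p : (Fin dA × Reg n) × (Fin dB × Reg n), ‖psiExt n φ p‖ ^ 2
      = ∑ a : Fin dA, ∑ r : Reg n, ∑ b : Fin dB, ∑ s : Reg n,
          ‖φ (a, b)‖ ^ 2 * ‖eprLocal n r‖ ^ 2 * ‖eprLocal n s‖ ^ 2 := by
        simp only [Fintype.sum_prod_type]
        exact Finset.sum_congr rfl fun a _ => Finset.sum_congr rfl fun r _ =>
          Finset.sum_congr rfl fun b _ => Finset.sum_congr rfl fun s _ => key a r b s
    _ = ∑ a : Fin dA, ∑ r : Reg n, ∑ b : Fin dB,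
          ‖φ (a, b)‖ ^ 2 * ‖eprLocal n r‖ ^ 2 := by
        refine Finset.sum_congr rfl fun a _ => Finset.sum_congr rfl fun r _ =>
          Finset.sum_congr rfl fun b _ => ?_
        rw [← Finset.mul_sum, sum_sq_eprLocal, mul_one]
    _ = ∑ a : Fin dA, ∑ b : Fin dB, ‖φ (a, b)‖ ^ 2 := by
        refine Finset.sum_congr rfl fun a _ => ?_
        rw [Finset.sum_comm]
        refine Finset.sum_congr rfl fun b _ => ?_
        have : ∀ r : Reg n, ‖φ (a, b)‖ ^ 2 * ‖eprLocal n r‖ ^ 2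
            = ‖eprLocal n r‖ ^ 2 * ‖φ (a, b)‖ ^ 2 := fun r => mul_comm _ _
        simp only [this]
        rw [← Finset.sum_mul, sum_sq_eprLocal, one_mul]
    _ = ∑ p : Fin dA × Fin dB, ‖φ p‖ ^ 2 := by rw [Fintype.sum_prod_type]

end epr

end Stmt4Aux
namespace Stmt4Aux

open Matrix

section structural

variable {dA dB n : ℕ}

set_option maxHeartbeats 2000000 in
lemma reduceA (N : Matrix (Reg n) (Reg n) ℂ) (v : (Fin dA × Reg n) × (Fin dB × Reg n) → ℂ)
    (a : Fin dA) (r : Reg n) (b : Fin dB) (s : Reg n) :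
    (((1 : Matrix (Fin dA) (Fin dA) ℂ) ⊗ₖ N) ⊗ₖ
        (1 : Matrix (Fin dB × Reg n) (Fin dB × Reg n) ℂ)).mulVec v ((a, r), (b, s))
      = ∑ r' : Reg n, N r r' * v ((a, r'), (b, s)) := by
  rw [kron_mulVec, Fintype.sum_prod_type, Finset.sum_comm]
  simp only [kroneckerMap_apply, Matrix.one_apply, mul_ite, ite_mul, mul_one, one_mul,
    mul_zero, zero_mul, Finset.sum_ite_eq, Finset.mem_univ, if_true]

set_option maxHeartbeats 2000000 in
lemma mulVec_full (P : Matrix (Fin dA) (Fin dA) ℂ) (Q : Matrix (Fin dB) (Fin dB) ℂ)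
    (φ : Fin dA × Fin dB → ℂ) :
    ((P ⊗ₖ (1 : Matrix (Reg n) (Reg n) ℂ)) ⊗ₖ (Q ⊗ₖ (1 : Matrix (Reg n) (Reg n) ℂ))).mulVec
        (psiExt n φ)
      = psiExt n ((P ⊗ₖ Q).mulVec φ) := by
  funext p
  obtain ⟨⟨a, r⟩, b, s⟩ := p
  rw [kron_mulVec]
  simp only [Fintype.sum_prod_type, kroneckerMap_apply, Matrix.one_apply, mul_ite, ite_mul,
    mul_one, one_mul, mul_zero, zero_mul, Finset.sum_ite_irrel, Finset.sum_const_zero,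
    Finset.sum_ite_eq, Finset.mem_univ, if_true, psiExt, kron_mulVec]
  simp only [Finset.sum_mul]
  exact Finset.sum_congr rfl fun a' _ => Finset.sum_congr rfl fun b' _ => by ring

lemma epr_transpose (φ : Fin dA × Fin dB → ℂ) (i : Fin n) (M : Matrix (Fin 2) (Fin 2) ℂ) :
    (((1 : Matrix (Fin dA) (Fin dA) ℂ) ⊗ₖ onQubit (i, (0 : Fin 2)) M) ⊗ₖ
        (1 : Matrix (Fin dB × Reg n) (Fin dB × Reg n) ℂ)).mulVec (psiExt n φ)
      = (((1 : Matrix (Fin dA) (Fin dA) ℂ) ⊗ₖ onQubit (i, (1 : Fin 2)) Mᵀ) ⊗ₖ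
        (1 : Matrix (Fin dB × Reg n) (Fin dB × Reg n) ℂ)).mulVec (psiExt n φ) := by
  funext p
  obtain ⟨⟨a, r⟩, b, s⟩ := p
  rw [reduceA, reduceA]
  have hL : (∑ r' : Reg n, onQubit (i, (0 : Fin 2)) M r r' * psiExt n φ ((a, r'), (b, s)))
      = ∑ c, M (r (i, 0)) c *
          psiExt n φ ((a, Function.update r (i, (0 : Fin 2)) c), (b, s)) :=
    onQubit_mulVec _ M _ r
  have hR : (∑ r' : Reg n, onQubit (i, (1 : Fin 2)) Mᵀ r r' * psiExt n φ ((a, r'), (b, s)))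
      = ∑ c, Mᵀ (r (i, 1)) c *
          psiExt n φ ((a, Function.update r (i, (1 : Fin 2)) c), (b, s)) :=
    onQubit_mulVec _ Mᵀ _ r
  rw [hL, hR]
  simp only [psiExt, eprLocal_update_fst, eprLocal_update_snd, eprAmp, Matrix.transpose_apply,
    mul_ite, ite_mul, mul_zero, zero_mul, Finset.sum_ite_eq, Finset.sum_ite_eq',
    Finset.mem_univ, if_true]

end structural

end Stmt4Aux
namespace Stmt4Aux

open Matrix

section terms

variable {dA dB n : ℕ}

lemma kron_neg {α β : Type*} [Fintype α] [Fintype β] (A : Matrix α α ℂ) (B : Matrix β β ℂ) :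
    A ⊗ₖ (-B) = -(A ⊗ₖ B) := by
  ext ⟨i, j⟩ ⟨k, l⟩
  simp [Matrix.kroneckerMap_apply]

lemma neg_kron {α β : Type*} [Fintype α] [Fintype β] (A : Matrix α α ℂ) (B : Matrix β β ℂ) :
    (-A) ⊗ₖ B = -(A ⊗ₖ B) := by
  ext ⟨i, j⟩ ⟨k, l⟩
  simp [Matrix.kroneckerMap_apply]

lemma key1 {P : Matrix (Fin dA) (Fin dA) ℂ} {Q : Matrix (Fin dB) (Fin dB) ℂ}
    (hQ : Q * Q = 1) (hQu : IsUni ((1 : Matrix (Fin dA) (Fin dA) ℂ) ⊗ₖ Q))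
    (ψ : Fin dA × Fin dB → ℂ) :
    cnorm ((P ⊗ₖ (1 : Matrix (Fin dB) (Fin dB) ℂ)).mulVec ψ
        - ((1 : Matrix (Fin dA) (Fin dA) ℂ) ⊗ₖ Q).mulVec ψ)
      = cnorm ((P ⊗ₖ Q).mulVec ψ - ψ) := by
  have h : (P ⊗ₖ (1 : Matrix (Fin dB) (Fin dB) ℂ)).mulVec ψ
        - ((1 : Matrix (Fin dA) (Fin dA) ℂ) ⊗ₖ Q).mulVec ψ
      = ((1 : Matrix (Fin dA) (Fin dA) ℂ) ⊗ₖ Q).mulVec ((P ⊗ₖ Q).mulVec ψ - ψ) := by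
    rw [Matrix.mulVec_sub, Matrix.mulVec_mulVec, ← Matrix.mul_kronecker_mul, one_mul, hQ]
  rw [h, cnorm_mulVec hQu]

/-- The symmetric-Pauli term reduction. -/
lemma term_sym (P : Matrix (Fin dA) (Fin dA) ℂ) (Q : Matrix (Fin dB) (Fin dB) ℂ)
    (M : Matrix (Fin 2) (Fin 2) ℂ) (hM : IsUni M) (hsym : Mᵀ = M) (i : Fin n)
    (ψ : Fin dA × Fin dB → ℂ) :
    cnorm ((((P ⊗ₖ onQubit (i, (0 : Fin 2)) M) ⊗ₖ
          (1 : Matrix (Fin dB × Reg n) (Fin dB × Reg n) ℂ))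
        - ((1 : Matrix (Fin dA) (Fin dA) ℂ) ⊗ₖ onQubit (i, (1 : Fin 2)) M) ⊗ₖ
          (Q ⊗ₖ (1 : Matrix (Reg n) (Reg n) ℂ))).mulVec (psiExt n ψ))
      = cnorm ((P ⊗ₖ (1 : Matrix (Fin dB) (Fin dB) ℂ)).mulVec ψ
          - ((1 : Matrix (Fin dA) (Fin dA) ℂ) ⊗ₖ Q).mulVec ψ) := by
  set FA : Matrix ((Fin dA × Reg n) × (Fin dB × Reg n)) ((Fin dA × Reg n) × (Fin dB × Reg n)) ℂ :=
    (P ⊗ₖ (1 : Matrix (Reg n) (Reg n) ℂ)) ⊗ₖ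
      ((1 : Matrix (Fin dB) (Fin dB) ℂ) ⊗ₖ (1 : Matrix (Reg n) (Reg n) ℂ)) with hFA
  set FB : Matrix ((Fin dA × Reg n) × (Fin dB × Reg n)) ((Fin dA × Reg n) × (Fin dB × Reg n)) ℂ :=
    ((1 : Matrix (Fin dA) (Fin dA) ℂ) ⊗ₖ (1 : Matrix (Reg n) (Reg n) ℂ)) ⊗ₖ
      (Q ⊗ₖ (1 : Matrix (Reg n) (Reg n) ℂ)) with hFB
  set Q0 : Matrix ((Fin dA × Reg n) × (Fin dB × Reg n)) ((Fin dA × Reg n) × (Fin dB × Reg n)) ℂ :=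
    ((1 : Matrix (Fin dA) (Fin dA) ℂ) ⊗ₖ onQubit (i, (0 : Fin 2)) M) ⊗ₖ
      (1 : Matrix (Fin dB × Reg n) (Fin dB × Reg n) ℂ) with hQ0
  set Q1 : Matrix ((Fin dA × Reg n) × (Fin dB × Reg n)) ((Fin dA × Reg n) × (Fin dB × Reg n)) ℂ :=
    ((1 : Matrix (Fin dA) (Fin dA) ℂ) ⊗ₖ onQubit (i, (1 : Fin 2)) M) ⊗ₖ
      (1 : Matrix (Fin dB × Reg n) (Fin dB × Reg n) ℂ) with hQ1
  have fact1 : (P ⊗ₖ onQubit (i, (0 : Fin 2)) M) ⊗ₖ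
      (1 : Matrix (Fin dB × Reg n) (Fin dB × Reg n) ℂ) = FA * Q0 := by
    rw [hFA, hQ0]
    simp only [← Matrix.mul_kronecker_mul, one_mul, mul_one, Matrix.one_kronecker_one]
  have fact2 : ((1 : Matrix (Fin dA) (Fin dA) ℂ) ⊗ₖ onQubit (i, (1 : Fin 2)) M) ⊗ₖ
      (Q ⊗ₖ (1 : Matrix (Reg n) (Reg n) ℂ)) = Q1 * FB := by
    rw [hQ1, hFB]
    simp only [← Matrix.mul_kronecker_mul, one_mul, mul_one, Matrix.one_kronecker_one]
  have fact3 : FA * Q1 = Q1 * FA := by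
    rw [hFA, hQ1]
    simp only [← Matrix.mul_kronecker_mul, one_mul, mul_one, Matrix.one_kronecker_one]
  have htr : Q0.mulVec (psiExt n ψ) = Q1.mulVec (psiExt n ψ) := by
    rw [hQ0, hQ1]
    have := epr_transpose ψ i M
    rwa [hsym] at this
  have huniQ1 : IsUni Q1 := by
    rw [hQ1]
    exact (IsUni.one.kron (hM.onQubit _)).kron IsUni.one
  rw [Matrix.sub_mulVec, fact1, fact2, ← Matrix.mulVec_mulVec, htr, Matrix.mulVec_mulVec,
    fact3, ← Matrix.mulVec_mulVec, ← Matrix.mulVec_mulVec, ← Matrix.mulVec_sub,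
    cnorm_mulVec huniQ1, hFA, hFB, mulVec_full, mulVec_full, ← psiExt_sub, cnorm_psiExt]

/-- The antisymmetric-Pauli term reduction. -/
lemma term_anti (P : Matrix (Fin dA) (Fin dA) ℂ) (Q : Matrix (Fin dB) (Fin dB) ℂ)
    (M : Matrix (Fin 2) (Fin 2) ℂ) (hM : IsUni M) (hanti : Mᵀ = -M) (i : Fin n)
    (ψ : Fin dA × Fin dB → ℂ) :
    cnorm ((((P ⊗ₖ onQubit (i, (0 : Fin 2)) M) ⊗ₖ
          (1 : Matrix (Fin dB × Reg n) (Fin dB × Reg n) ℂ))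
        - ((1 : Matrix (Fin dA) (Fin dA) ℂ) ⊗ₖ onQubit (i, (1 : Fin 2)) M) ⊗ₖ
          (Q ⊗ₖ (1 : Matrix (Reg n) (Reg n) ℂ))).mulVec (psiExt n ψ))
      = cnorm ((P ⊗ₖ (1 : Matrix (Fin dB) (Fin dB) ℂ)).mulVec ψ
          + ((1 : Matrix (Fin dA) (Fin dA) ℂ) ⊗ₖ Q).mulVec ψ) := by
  set FA : Matrix ((Fin dA × Reg n) × (Fin dB × Reg n)) ((Fin dA × Reg n) × (Fin dB × Reg n)) ℂ :=
    (P ⊗ₖ (1 : Matrix (Reg n) (Reg n) ℂ)) ⊗ₖ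
      ((1 : Matrix (Fin dB) (Fin dB) ℂ) ⊗ₖ (1 : Matrix (Reg n) (Reg n) ℂ)) with hFA
  set FB : Matrix ((Fin dA × Reg n) × (Fin dB × Reg n)) ((Fin dA × Reg n) × (Fin dB × Reg n)) ℂ :=
    ((1 : Matrix (Fin dA) (Fin dA) ℂ) ⊗ₖ (1 : Matrix (Reg n) (Reg n) ℂ)) ⊗ₖ
      (Q ⊗ₖ (1 : Matrix (Reg n) (Reg n) ℂ)) with hFB
  set Q0 : Matrix ((Fin dA × Reg n) × (Fin dB × Reg n)) ((Fin dA × Reg n) × (Fin dB × Reg n)) ℂ :=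
    ((1 : Matrix (Fin dA) (Fin dA) ℂ) ⊗ₖ onQubit (i, (0 : Fin 2)) M) ⊗ₖ
      (1 : Matrix (Fin dB × Reg n) (Fin dB × Reg n) ℂ) with hQ0
  set Q1 : Matrix ((Fin dA × Reg n) × (Fin dB × Reg n)) ((Fin dA × Reg n) × (Fin dB × Reg n)) ℂ :=
    ((1 : Matrix (Fin dA) (Fin dA) ℂ) ⊗ₖ onQubit (i, (1 : Fin 2)) M) ⊗ₖ
      (1 : Matrix (Fin dB × Reg n) (Fin dB × Reg n) ℂ) with hQ1
  have fact1 : (P ⊗ₖ onQubit (i, (0 : Fin 2)) M) ⊗ₖ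
      (1 : Matrix (Fin dB × Reg n) (Fin dB × Reg n) ℂ) = FA * Q0 := by
    rw [hFA, hQ0]
    simp only [← Matrix.mul_kronecker_mul, one_mul, mul_one, Matrix.one_kronecker_one]
  have fact2 : ((1 : Matrix (Fin dA) (Fin dA) ℂ) ⊗ₖ onQubit (i, (1 : Fin 2)) M) ⊗ₖ
      (Q ⊗ₖ (1 : Matrix (Reg n) (Reg n) ℂ)) = Q1 * FB := by
    rw [hQ1, hFB]
    simp only [← Matrix.mul_kronecker_mul, one_mul, mul_one, Matrix.one_kronecker_one]
  have fact3 : FA * Q1 = Q1 * FA := by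
    rw [hFA, hQ1]
    simp only [← Matrix.mul_kronecker_mul, one_mul, mul_one, Matrix.one_kronecker_one]
  have htr : Q0.mulVec (psiExt n ψ) = -(Q1.mulVec (psiExt n ψ)) := by
    rw [hQ0, hQ1]
    have h := epr_transpose ψ i M
    rw [hanti] at h
    rw [h, onQubit_neg, kron_neg, neg_kron, Matrix.neg_mulVec]
  have huniQ1 : IsUni Q1 := by
    rw [hQ1]
    exact (IsUni.one.kron (hM.onQubit _)).kron IsUni.one
  have step : ((((P ⊗ₖ onQubit (i, (0 : Fin 2)) M) ⊗ₖ
          (1 : Matrix (Fin dB × Reg n) (Fin dB × Reg n) ℂ))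
        - ((1 : Matrix (Fin dA) (Fin dA) ℂ) ⊗ₖ onQubit (i, (1 : Fin 2)) M) ⊗ₖ
          (Q ⊗ₖ (1 : Matrix (Reg n) (Reg n) ℂ))).mulVec (psiExt n ψ))
      = -(Q1.mulVec (FA.mulVec (psiExt n ψ) + FB.mulVec (psiExt n ψ))) := by
    rw [Matrix.sub_mulVec, fact1, fact2, ← Matrix.mulVec_mulVec, htr, Matrix.mulVec_neg,
      Matrix.mulVec_mulVec, fact3, ← Matrix.mulVec_mulVec, ← Matrix.mulVec_mulVec,
      Matrix.mulVec_add]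
    abel
  rw [step, cnorm_neg, cnorm_mulVec huniQ1, hFA, hFB, mulVec_full, mulVec_full,
    ← psiExt_add, cnorm_psiExt]

end terms

end Stmt4Aux

open Matrix Stmt4Aux in
/-- Lemma (the two ways of swapping halves of EPR states nearly agree on ψ'). -/
theorem stmt_4 :
    ∃ C : ℝ, 0 < C ∧
    ∀ (n : ℕ), 1 ≤ n → ∀ (ε : ℝ), 0 ≤ ε →
    ∀ (dA dB : ℕ)
      (XA ZA : Fin n → Matrix (Fin dA) (Fin dA) ℂ)
      (XB ZB : Fin n → Matrix (Fin dB) (Fin dB) ℂ)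
      (ψ : Fin dA × Fin dB → ℂ),
      NQubitHyp n ε XA ZA XB ZB ψ →
      ∀ i : Fin n,
        cnorm (((swapOp n (XA i) (ZA i) i ⊗ₖ (1 : Matrix (Fin dB × Reg n) (Fin dB × Reg n) ℂ))
            - swapOp' n (XB i) (ZB i) i).mulVec (psiExt n ψ)) ≤ C * ε := by
  refine ⟨2, by norm_num, ?_⟩
  intro n hn ε hε dA dB XA ZA XB ZB ψ hyp i
  obtain ⟨-, hrefl, hacA, hacB, -, -, hEPR⟩ := hyp
  obtain ⟨hXA, hZA, hXB, hZB⟩ := hrefl i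
  set Dx : Matrix ((Fin dA × Reg n) × (Fin dB × Reg n)) ((Fin dA × Reg n) × (Fin dB × Reg n)) ℂ :=
    (XA i ⊗ₖ onQubit (i, (0 : Fin 2)) sx) ⊗ₖ (1 : Matrix (Fin dB × Reg n) (Fin dB × Reg n) ℂ)
      - ((1 : Matrix (Fin dA) (Fin dA) ℂ) ⊗ₖ onQubit (i, (1 : Fin 2)) sx) ⊗ₖ
        (XB i ⊗ₖ (1 : Matrix (Reg n) (Reg n) ℂ)) with hDx
  set Dz : Matrix ((Fin dA × Reg n) × (Fin dB × Reg n)) ((Fin dA × Reg n) × (Fin dB × Reg n)) ℂ :=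
    (ZA i ⊗ₖ onQubit (i, (0 : Fin 2)) sz) ⊗ₖ (1 : Matrix (Fin dB × Reg n) (Fin dB × Reg n) ℂ)
      - ((1 : Matrix (Fin dA) (Fin dA) ℂ) ⊗ₖ onQubit (i, (1 : Fin 2)) sz) ⊗ₖ
        (ZB i ⊗ₖ (1 : Matrix (Reg n) (Reg n) ℂ)) with hDz
  set Dy : Matrix ((Fin dA × Reg n) × (Fin dB × Reg n)) ((Fin dA × Reg n) × (Fin dB × Reg n)) ℂ :=
    ((XA i * ZA i) ⊗ₖ onQubit (i, (0 : Fin 2)) sy) ⊗ₖ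
        (1 : Matrix (Fin dB × Reg n) (Fin dB × Reg n) ℂ)
      - ((1 : Matrix (Fin dA) (Fin dA) ℂ) ⊗ₖ onQubit (i, (1 : Fin 2)) sy) ⊗ₖ
        ((XB i * ZB i) ⊗ₖ (1 : Matrix (Reg n) (Reg n) ℂ)) with hDy
  have hdecomp : (swapOp n (XA i) (ZA i) i ⊗ₖ (1 : Matrix (Fin dB × Reg n) (Fin dB × Reg n) ℂ))
      - swapOp' n (XB i) (ZB i) i = (1/2 : ℂ) • (Dx + Dz + Complex.I • Dy) := by
    rw [hDx, hDz, hDy]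
    unfold swapOp swapOp'
    simp only [Matrix.smul_kronecker, Matrix.add_kronecker, Matrix.one_kronecker_one]
    module
  rw [hdecomp, Matrix.smul_mulVec, Matrix.add_mulVec, Matrix.add_mulVec,
    Matrix.smul_mulVec, cnorm_smul]
  have hnx : cnorm (Dx.mulVec (psiExt n ψ)) ≤ ε := by
    rw [hDx, term_sym (XA i) (XB i) sx sx_uni sx_transpose i ψ,
      key1 hXB.2 (IsUni.one.kron (isUni_of_reflection hXB)) ψ]
    exact hEPR XA XB (Or.inl ⟨rfl, rfl⟩) i
  have hnz : cnorm (Dz.mulVec (psiExt n ψ)) ≤ ε := by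
    rw [hDz, term_sym (ZA i) (ZB i) sz sz_uni sz_transpose i ψ,
      key1 hZB.2 (IsUni.one.kron (isUni_of_reflection hZB)) ψ]
    exact hEPR ZA ZB (Or.inr ⟨rfl, rfl⟩) i
  have hny : cnorm (Dy.mulVec (psiExt n ψ)) ≤ ε + ε := by
    rw [hDy, term_anti (XA i * ZA i) (XB i * ZB i) sy sy_uni sy_transpose i ψ]
    have e1 : ((XA i * ZA i) ⊗ₖ (1 : Matrix (Fin dB) (Fin dB) ℂ)).mulVec ψ
        - (XA i ⊗ₖ ZB i).mulVec ψ
        = (XA i ⊗ₖ (1 : Matrix (Fin dB) (Fin dB) ℂ)).mulVec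
            ((ZA i ⊗ₖ (1 : Matrix (Fin dB) (Fin dB) ℂ)).mulVec ψ
              - ((1 : Matrix (Fin dA) (Fin dA) ℂ) ⊗ₖ ZB i).mulVec ψ) := by
      rw [Matrix.mulVec_sub, Matrix.mulVec_mulVec, Matrix.mulVec_mulVec]
      simp only [← Matrix.mul_kronecker_mul, one_mul, mul_one]
    have t1 : cnorm (((XA i * ZA i) ⊗ₖ (1 : Matrix (Fin dB) (Fin dB) ℂ)).mulVec ψ
        - (XA i ⊗ₖ ZB i).mulVec ψ) ≤ ε := by
      rw [e1, cnorm_mulVec ((isUni_of_reflection hXA).kron IsUni.one),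
        key1 hZB.2 (IsUni.one.kron (isUni_of_reflection hZB)) ψ]
      exact hEPR ZA ZB (Or.inr ⟨rfl, rfl⟩) i
    have e2 : (XA i ⊗ₖ ZB i).mulVec ψ
        - ((1 : Matrix (Fin dA) (Fin dA) ℂ) ⊗ₖ (ZB i * XB i)).mulVec ψ
        = ((1 : Matrix (Fin dA) (Fin dA) ℂ) ⊗ₖ ZB i).mulVec
            ((XA i ⊗ₖ (1 : Matrix (Fin dB) (Fin dB) ℂ)).mulVec ψ
              - ((1 : Matrix (Fin dA) (Fin dA) ℂ) ⊗ₖ XB i).mulVec ψ) := by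
      rw [Matrix.mulVec_sub, Matrix.mulVec_mulVec, Matrix.mulVec_mulVec]
      simp only [← Matrix.mul_kronecker_mul, one_mul, mul_one]
    have t2 : cnorm ((XA i ⊗ₖ ZB i).mulVec ψ
        - ((1 : Matrix (Fin dA) (Fin dA) ℂ) ⊗ₖ (ZB i * XB i)).mulVec ψ) ≤ ε := by
      rw [e2, cnorm_mulVec (IsUni.one.kron (isUni_of_reflection hZB)),
        key1 hXB.2 (IsUni.one.kron (isUni_of_reflection hXB)) ψ]
      exact hEPR XA XB (Or.inl ⟨rfl, rfl⟩) i
    have hzx : ZB i * XB i = -(XB i * ZB i) := eq_neg_of_add_eq_zero_right (hacB i)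
    have e3 : ((XA i * ZA i) ⊗ₖ (1 : Matrix (Fin dB) (Fin dB) ℂ)).mulVec ψ
        + ((1 : Matrix (Fin dA) (Fin dA) ℂ) ⊗ₖ (XB i * ZB i)).mulVec ψ
        = (((XA i * ZA i) ⊗ₖ (1 : Matrix (Fin dB) (Fin dB) ℂ)).mulVec ψ
            - (XA i ⊗ₖ ZB i).mulVec ψ)
          + ((XA i ⊗ₖ ZB i).mulVec ψ
            - ((1 : Matrix (Fin dA) (Fin dA) ℂ) ⊗ₖ (ZB i * XB i)).mulVec ψ) := by
      rw [hzx, kron_neg, Matrix.neg_mulVec]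
      abel
    rw [e3]
    exact le_trans (cnorm_add_le _ _) (add_le_add t1 t2)
  have hIy : cnorm (Complex.I • Dy.mulVec (psiExt n ψ)) = cnorm (Dy.mulVec (psiExt n ψ)) := by
    rw [cnorm_smul, Complex.norm_I, one_mul]
  have tineq : cnorm (Dx.mulVec (psiExt n ψ) + Dz.mulVec (psiExt n ψ)
        + Complex.I • Dy.mulVec (psiExt n ψ))
      ≤ cnorm (Dx.mulVec (psiExt n ψ)) + cnorm (Dz.mulVec (psiExt n ψ))
        + cnorm (Dy.mulVec (psiExt n ψ)) := by
    calc cnorm (Dx.mulVec (psiExt n ψ) + Dz.mulVec (psiExt n ψ)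
          + Complex.I • Dy.mulVec (psiExt n ψ))
        ≤ cnorm (Dx.mulVec (psiExt n ψ) + Dz.mulVec (psiExt n ψ))
          + cnorm (Complex.I • Dy.mulVec (psiExt n ψ)) := cnorm_add_le _ _
      _ ≤ cnorm (Dx.mulVec (psiExt n ψ)) + cnorm (Dz.mulVec (psiExt n ψ))
          + cnorm (Complex.I • Dy.mulVec (psiExt n ψ)) :=
            add_le_add (cnorm_add_le _ _) le_rfl
      _ = cnorm (Dx.mulVec (psiExt n ψ)) + cnorm (Dz.mulVec (psiExt n ψ))
          + cnorm (Dy.mulVec (psiExt n ψ)) := by rw [hIy]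
  have hhalf : ‖(1/2 : ℂ)‖ = 1/2 := by norm_num
  rw [hhalf]
  linarith

end
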